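/- Let (C, a) ∈ K_x with a(α) ≠ 0 for all but finitely many α ∈ C, and let v be a place of k. Then the function α ↦ 1/‖a(α)‖_v (defined where a(α) ≠ 0) belongs to C_x. -/

import Mathlib

open NumberField IsDedekindDomain Real
open scoped NNReal

variable (k : Type*) [Field k] [NumberField k]

/-- The normalized absolute value `‖x‖_v` attached to a finite place `v` of `k`:
`N(𝔭)^{-ord_v(x)/[k:ℚ]}`, i.e. `|x|_v^{n_v}` in the usual normalization
(`|p|_v = p⁻¹` and `n_v = [k_v : ℚ_v]/[k : ℚ]`). -/
noncomputable def finNorm (v : HeightOneSpectrum (𝓞 k)) (x : k) : ℝ :=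
  ((WithZeroMulInt.toNNReal
      (show ((Ideal.absNorm v.asIdeal : ℝ≥0)) ≠ 0 by
        have : Ideal.absNorm v.asIdeal ≠ 0 := by
          simpa [Ideal.absNorm_eq_zero_iff] using v.ne_bot
        exact_mod_cast this)
    (v.valuation k x) : ℝ)) ^ ((Module.finrank ℚ k : ℝ)⁻¹)

/-- The normalized absolute value `‖x‖_w = |σ_w x|^{n_w}` attached to an
infinite place `w` of `k`, where `n_w = mult(w)/[k:ℚ]` is the normalized local degree. -/
noncomputable def infNorm (w : InfinitePlace k) (x : k) : ℝ :=
  (w x) ^ ((w.mult : ℝ) / (Module.finrank ℚ k : ℝ))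
/-- `log⁺ t = log max {1, t}`. -/
noncomputable def logPlus (t : ℝ) : ℝ := Real.log (max 1 t)

/-- The absolute logarithmic height of a field element:
`h(x) = ∑_v log⁺ ‖x‖_v`, the sum being over all places of `k`. -/
noncomputable def elemHeight (x : k) : ℝ :=
  (∑ w : InfinitePlace k, logPlus (infNorm k w x)) +
    (∑ᶠ v : HeightOneSpectrum (𝓞 k), logPlus (finNorm k v x))

/-- The absolute logarithmic height of a point of `ℙ^M(k)` given by homogeneous
coordinates: `h(x) = ∑_v log max_i ‖x_i‖_v`. -/
noncomputable def projHeight {M : ℕ} (x : Fin (M + 1) → k) : ℝ :=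
  (∑ w : InfinitePlace k,
      Real.log (Finset.univ.sup' Finset.univ_nonempty fun i => infNorm k w (x i))) +
    (∑ᶠ v : HeightOneSpectrum (𝓞 k),
      Real.log (Finset.univ.sup' Finset.univ_nonempty fun i => finNorm k v (x i)))

/-- A map `a : C → k`, defined on a cofinite subset `C ⊆ Λ`, is *small* with respect
to the sequence of points `x : Λ → ℙ^M(k)` if `h(a(α)) = o(h(x(α)))`: for every
`ε > 0` there is a cofinite subset `Cε ⊆ C` on which `h(a(α)) ≤ ε · h(x(α))`. -/
def IsSmallMap {Λ : Type*} {M : ℕ} (x : Λ → (Fin (M + 1) → k))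
    (C : Set Λ) (a : Λ → k) : Prop :=
  Cᶜ.Finite ∧
    ∀ ε > (0 : ℝ), ∃ Cε ⊆ C, Cεᶜ.Finite ∧
      ∀ α ∈ Cε, elemHeight k (a α) ≤ ε * projHeight k (x α)
section Aux
open IsDedekindDomain.HeightOneSpectrum Multiplicative

variable {k}

lemma nv_ne_zero (v : HeightOneSpectrum (𝓞 k)) : ((Ideal.absNorm v.asIdeal : ℝ≥0)) ≠ 0 := by
  have : Ideal.absNorm v.asIdeal ≠ 0 := by
    simpa [Ideal.absNorm_eq_zero_iff] using v.ne_bot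
  exact_mod_cast this

/-- The unnormalized finite norm. -/
noncomputable def vnorm (v : HeightOneSpectrum (𝓞 k)) (x : k) : ℝ :=
  ((WithZeroMulInt.toNNReal (nv_ne_zero v) (v.valuation k x) : ℝ≥0) : ℝ)

variable (k) in
lemma finNorm_def (v : HeightOneSpectrum (𝓞 k)) (x : k) :
    finNorm k v x = (vnorm v x) ^ ((Module.finrank ℚ k : ℝ)⁻¹) := rfl

lemma vnorm_nonneg (v : HeightOneSpectrum (𝓞 k)) (x : k) : 0 ≤ vnorm v x := NNReal.coe_nonneg _

lemma vnorm_pos (v : HeightOneSpectrum (𝓞 k)) {x : k} (hx : x ≠ 0) : 0 < vnorm v x := by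
  have h1 : v.valuation k x ≠ 0 := (Valuation.ne_zero_iff _).mpr hx
  exact_mod_cast WithZeroMulInt.toNNReal_pos (nv_ne_zero v) h1

lemma vnorm_eq_one (v : HeightOneSpectrum (𝓞 k)) {x : k} (hx : v.valuation k x = 1) :
    vnorm v x = 1 := by simp [vnorm, hx]

lemma vnorm_inv (v : HeightOneSpectrum (𝓞 k)) (x : k) : vnorm v (x⁻¹) = (vnorm v x)⁻¹ := by
  simp [vnorm, map_inv₀]

lemma vnorm_div (v : HeightOneSpectrum (𝓞 k)) (x y : k) :
    vnorm v (x / y) = vnorm v x / vnorm v y := by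
  simp [vnorm, map_div₀]

variable (k) in
lemma finNorm_inv (v : HeightOneSpectrum (𝓞 k)) (x : k) :
    finNorm k v (x⁻¹) = (finNorm k v x)⁻¹ := by
  rw [finNorm_def, finNorm_def, vnorm_inv, Real.inv_rpow (vnorm_nonneg v x)]

variable (k) in
lemma finNorm_eq_one (v : HeightOneSpectrum (𝓞 k)) {x : k} (hx : v.valuation k x = 1) :
    finNorm k v x = 1 := by rw [finNorm_def, vnorm_eq_one v hx, Real.one_rpow]

variable (k) in
lemma finNorm_pos (v : HeightOneSpectrum (𝓞 k)) {x : k} (hx : x ≠ 0) : 0 < finNorm k v x := by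
  rw [finNorm_def]; exact Real.rpow_pos_of_pos (vnorm_pos v hx) _

variable (k) in
lemma infNorm_pos (w : InfinitePlace k) {x : k} (hx : x ≠ 0) : 0 < infNorm k w x :=
  Real.rpow_pos_of_pos (InfinitePlace.pos_iff.mpr hx) _

variable (k) in
lemma infNorm_nonneg (w : InfinitePlace k) (x : k) : 0 ≤ infNorm k w x :=
  Real.rpow_nonneg (AbsoluteValue.nonneg _ x) _

variable (k) in
lemma infNorm_inv (w : InfinitePlace k) (x : k) :
    infNorm k w (x⁻¹) = (infNorm k w x)⁻¹ := by
  unfold infNorm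
  rw [map_inv₀]
  exact Real.inv_rpow (AbsoluteValue.nonneg _ x) _

lemma logPlus_nonneg (t : ℝ) : 0 ≤ logPlus t := Real.log_nonneg (le_max_left _ _)

lemma logPlus_of_le_one {t : ℝ} (ht : t ≤ 1) : logPlus t = 0 := by
  rw [logPlus, max_eq_left ht, Real.log_one]

lemma logPlus_sub_logPlus_inv {t : ℝ} (ht : 0 < t) :
    logPlus t - logPlus t⁻¹ = Real.log t := by
  rcases le_total t 1 with h | h
  · rw [logPlus_of_le_one h, logPlus, max_eq_right (one_le_inv_iff₀.mpr ⟨ht, h⟩ : (1:ℝ) ≤ t⁻¹),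
      Real.log_inv]
    ring
  · rw [logPlus_of_le_one (inv_le_one_of_one_le₀ h), logPlus, max_eq_right h]
    ring

end Aux
section Aux2
open IsDedekindDomain.HeightOneSpectrum Multiplicative

variable {k}

lemma val_int_eq_one (v : HeightOneSpectrum (𝓞 k)) {r : 𝓞 k}
    (hdvd : ¬ v.asIdeal ∣ Ideal.span {r}) : v.intValuationDef r = 1 := by
  have h1 := v.intValuation_le_one r
  rcases lt_or_eq_of_le h1 with h | h
  · exact absurd ((v.intValuation_lt_one_iff_dvd r).mp h) hdvd
  · exact h

lemma finite_val_ne_one {b : k} (hb : b ≠ 0) :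
    {v : HeightOneSpectrum (𝓞 k) | v.valuation k b ≠ 1}.Finite := by
  obtain ⟨r, s, hs, hrs⟩ := IsFractionRing.div_surjective (A := 𝓞 k) b
  have hs0 : s ≠ 0 := nonZeroDivisors.ne_zero hs
  have hr0 : r ≠ 0 := by
    rintro rfl
    simp at hrs
    exact hb hrs.symm
  have hrspan : (Ideal.span {r} : Ideal (𝓞 k)) ≠ 0 := by
    simpa [Ideal.span_singleton_eq_bot] using hr0
  have hsspan : (Ideal.span {s} : Ideal (𝓞 k)) ≠ 0 := by
    simpa [Ideal.span_singleton_eq_bot] using hs0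
  refine Set.Finite.subset ((Ideal.finite_factors hrspan).union (Ideal.finite_factors hsspan)) ?_
  intro v hv
  by_contra hcon
  simp only [Set.mem_union, Set.mem_setOf_eq] at hcon
  push_neg at hcon
  apply hv
  rw [← hrs, map_div₀, valuation_of_algebraMap, valuation_of_algebraMap,
    intValuation_apply, intValuation_apply, val_int_eq_one v hcon.1,
    val_int_eq_one v hcon.2, div_one]

lemma support_logPlus_finNorm_subset (b : k) :
    (Function.support fun v : HeightOneSpectrum (𝓞 k) => logPlus (finNorm k v b)) ⊆
      {v : HeightOneSpectrum (𝓞 k) | v.valuation k b ≠ 1} := by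
  intro v hv
  simp only [Function.mem_support] at hv
  intro h1
  exact hv (by rw [finNorm_eq_one k v h1, logPlus_of_le_one le_rfl])

lemma support_log_finNorm_subset (b : k) :
    (Function.support fun v : HeightOneSpectrum (𝓞 k) => Real.log (finNorm k v b)) ⊆
      {v : HeightOneSpectrum (𝓞 k) | v.valuation k b ≠ 1} := by
  intro v hv
  simp only [Function.mem_support] at hv
  intro h1
  exact hv (by rw [finNorm_eq_one k v h1, Real.log_one])

variable (k) in
lemma logPlus_infNorm_le_elemHeight (w : InfinitePlace k) (b : k) :
    logPlus (infNorm k w b) ≤ elemHeight k b := by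
  unfold elemHeight
  have h1 : logPlus (infNorm k w b) ≤ ∑ w' : InfinitePlace k, logPlus (infNorm k w' b) :=
    Finset.single_le_sum (f := fun w' => logPlus (infNorm k w' b))
      (fun w' _ => logPlus_nonneg _) (Finset.mem_univ w)
  have h2 : (0:ℝ) ≤ ∑ᶠ v : HeightOneSpectrum (𝓞 k), logPlus (finNorm k v b) :=
    finsum_nonneg fun v => logPlus_nonneg _
  linarith

variable (k) in
lemma logPlus_finNorm_le_elemHeight (v : HeightOneSpectrum (𝓞 k)) {b : k} (hb : b ≠ 0) :
    logPlus (finNorm k v b) ≤ elemHeight k b := by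
  classical
  unfold elemHeight
  have h1 : (0:ℝ) ≤ ∑ w : InfinitePlace k, logPlus (infNorm k w b) :=
    Finset.sum_nonneg fun w _ => logPlus_nonneg _
  have hfin := finite_val_ne_one hb
  have hsub : (Function.support fun v' : HeightOneSpectrum (𝓞 k) => logPlus (finNorm k v' b)) ⊆
      (insert v hfin.toFinset : Finset _) := by
    intro v' hv'
    simp only [Finset.coe_insert, Set.mem_insert_iff]
    rcases support_logPlus_finNorm_subset b hv' with h
    right
    exact hfin.mem_toFinset.mpr h
  have h2 : (∑ᶠ v' : HeightOneSpectrum (𝓞 k), logPlus (finNorm k v' b)) =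
      ∑ v' ∈ (insert v hfin.toFinset), logPlus (finNorm k v' b) :=
    finsum_eq_sum_of_support_subset _ hsub
  have h3 : logPlus (finNorm k v b) ≤ ∑ v' ∈ (insert v hfin.toFinset), logPlus (finNorm k v' b) :=
    Finset.single_le_sum (f := fun v' => logPlus (finNorm k v' b))
      (fun v' _ => logPlus_nonneg _) (Finset.mem_insert_self v _)
  linarith [h2 ▸ h3]

end Aux2
section Aux3
open IsDedekindDomain.HeightOneSpectrum Multiplicative

variable {k}

lemma finsum_log_vnorm_int {r : 𝓞 k} (hr : r ≠ 0) :
    ∑ᶠ v : HeightOneSpectrum (𝓞 k), Real.log (vnorm v ((algebraMap (𝓞 k) k) r)) =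
      - Real.log ((Ideal.absNorm (Ideal.span {r} : Ideal (𝓞 k)) : ℝ)) := by
  classical
  have hspan : (Ideal.span {r} : Ideal (𝓞 k)) ≠ 0 := by
    simpa [Ideal.span_singleton_eq_bot] using hr
  set c : HeightOneSpectrum (𝓞 k) → ℕ := fun v =>
    (Associates.mk v.asIdeal).count (Associates.mk (Ideal.span {r} : Ideal (𝓞 k))).factors with hc
  set S : Finset (HeightOneSpectrum (𝓞 k)) :=
    (Ideal.finite_factors hspan).toFinset with hSdef
  have hc0 : ∀ v : HeightOneSpectrum (𝓞 k), v ∉ S → c v = 0 := by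
    intro v hv
    by_contra hne
    exact hv ((Ideal.finite_factors hspan).mem_toFinset.mpr
      ((Associates.count_ne_zero_iff_dvd hspan v.irreducible).mp hne))
  -- termwise value of the local norm
  have hterm : ∀ v : HeightOneSpectrum (𝓞 k),
      Real.log (vnorm v ((algebraMap (𝓞 k) k) r)) =
        -(c v : ℝ) * Real.log ((Ideal.absNorm v.asIdeal : ℝ)) := by
    intro v
    have hval : v.valuation k ((algebraMap (𝓞 k) k) r) =
        ((Multiplicative.ofAdd (-(c v : ℤ)) : Multiplicative ℤ) : WithZero (Multiplicative ℤ)) := by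
      rw [valuation_of_algebraMap, intValuation_apply, v.intValuationDef_if_neg hr]
      rfl
    have htoNN : WithZeroMulInt.toNNReal (nv_ne_zero v) (v.valuation k ((algebraMap (𝓞 k) k) r)) =
        ((Ideal.absNorm v.asIdeal : ℝ≥0)) ^ (-(c v : ℤ)) := by
      rw [hval, WithZeroMulInt.toNNReal_neg_apply _ WithZero.coe_ne_zero]
      congr 1
    rw [vnorm, htoNN]
    push_cast
    rw [Real.log_zpow]
    push_cast
    ring
  -- the factorization of the ideal
  have hfact : (Ideal.span {r} : Ideal (𝓞 k)) = ∏ v ∈ S, v.asIdeal ^ (c v) := by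
    have hsub2 : (Function.mulSupport fun v : HeightOneSpectrum (𝓞 k) =>
        v.maxPowDividing (Ideal.span {r} : Ideal (𝓞 k))) ⊆ (S : Set (HeightOneSpectrum (𝓞 k))) := by
      intro v hv
      simp only [Function.mem_mulSupport, maxPowDividing] at hv
      by_contra hvS
      refine hv ?_
      show v.asIdeal ^ c v = 1
      rw [hc0 v (by simpa using hvS), pow_zero]
    rw [← Ideal.finprod_heightOneSpectrum_factorization hspan,
      finprod_eq_prod_of_mulSupport_subset _ hsub2]
    exact Finset.prod_congr rfl fun v _ => rfl
  have habs0 : Ideal.absNorm (Ideal.span {r} : Ideal (𝓞 k)) =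
      ∏ v ∈ S, (Ideal.absNorm v.asIdeal) ^ (c v) := by
    rw [hfact, map_prod]
    exact Finset.prod_congr rfl fun v _ => map_pow _ _ _
  have habs : (Ideal.absNorm (Ideal.span {r} : Ideal (𝓞 k)) : ℝ) =
      ∏ v ∈ S, ((Ideal.absNorm v.asIdeal : ℝ)) ^ (c v) := by
    rw [habs0]
    push_cast
    rfl
  have hlog : Real.log ((Ideal.absNorm (Ideal.span {r} : Ideal (𝓞 k)) : ℝ)) =
      ∑ v ∈ S, (c v : ℝ) * Real.log ((Ideal.absNorm v.asIdeal : ℝ)) := by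
    rw [habs, Real.log_prod]
    · refine Finset.sum_congr rfl fun v _ => ?_
      rw [Real.log_pow]
    · intro v _
      exact pow_ne_zero _ (by exact_mod_cast (by simpa [Ideal.absNorm_eq_zero_iff] using v.ne_bot :
        Ideal.absNorm v.asIdeal ≠ 0))
  have hsupp : (Function.support fun v : HeightOneSpectrum (𝓞 k) =>
      Real.log (vnorm v ((algebraMap (𝓞 k) k) r))) ⊆ (S : Set (HeightOneSpectrum (𝓞 k))) := by
    intro v hv
    simp only [Function.mem_support] at hv
    by_contra hvS
    apply hv
    rw [hterm v, hc0 v hvS]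
    simp
  rw [finsum_eq_sum_of_support_subset _ hsupp, hlog, ← Finset.sum_neg_distrib]
  refine Finset.sum_congr rfl fun v _ => ?_
  rw [hterm v]
  ring

end Aux3
section Aux4
open IsDedekindDomain.HeightOneSpectrum Multiplicative

variable {k}

lemma absNorm_span_cast_eq (r : 𝓞 k) :
    ((Ideal.absNorm (Ideal.span {r} : Ideal (𝓞 k)) : ℝ)) =
      |((Algebra.norm ℚ ((algebraMap (𝓞 k) k) r) : ℚ) : ℝ)| := by
  rw [Ideal.absNorm_span_singleton, ← RingOfIntegers.coe_eq_algebraMap, ← Algebra.coe_norm_int]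
  push_cast
  rw [Nat.cast_natAbs]
  push_cast
  rfl

lemma norm_ne_zero {b : k} (hb : b ≠ 0) : (Algebra.norm ℚ b) ≠ 0 := by
  simpa using (Algebra.norm_ne_zero_iff (R := ℚ)).mpr hb

lemma finsum_log_vnorm {b : k} (hb : b ≠ 0) :
    ∑ᶠ v : HeightOneSpectrum (𝓞 k), Real.log (vnorm v b) =
      - Real.log |((Algebra.norm ℚ b : ℚ) : ℝ)| := by
  classical
  obtain ⟨r, s, hs, hrs⟩ := IsFractionRing.div_surjective (A := 𝓞 k) b
  have hs0 : s ≠ 0 := nonZeroDivisors.ne_zero hs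
  have hr0 : r ≠ 0 := by
    rintro rfl
    simp at hrs
    exact hb hrs.symm
  have hrk : (algebraMap (𝓞 k) k) r ≠ 0 := by
    simpa using hr0
  have hsk : (algebraMap (𝓞 k) k) s ≠ 0 := by
    simpa using hs0
  -- termwise
  have hterm : ∀ v : HeightOneSpectrum (𝓞 k), Real.log (vnorm v b) =
      Real.log (vnorm v ((algebraMap (𝓞 k) k) r)) -
        Real.log (vnorm v ((algebraMap (𝓞 k) k) s)) := by
    intro v
    rw [← hrs, vnorm_div, Real.log_div (vnorm_pos v hrk).ne' (vnorm_pos v hsk).ne']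
  -- common support finset
  set S : Finset (HeightOneSpectrum (𝓞 k)) :=
    ((finite_val_ne_one hrk).union (finite_val_ne_one hsk)).toFinset with hS
  have hsubr : (Function.support fun v : HeightOneSpectrum (𝓞 k) =>
      Real.log (vnorm v ((algebraMap (𝓞 k) k) r))) ⊆ (S : Set _) := by
    intro v hv
    simp only [Function.mem_support] at hv
    simp only [hS, Set.Finite.coe_toFinset, Set.mem_union, Set.mem_setOf_eq]
    left
    intro h1
    exact hv (by rw [vnorm_eq_one v h1, Real.log_one])
  have hsubs : (Function.support fun v : HeightOneSpectrum (𝓞 k) =>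
      Real.log (vnorm v ((algebraMap (𝓞 k) k) s))) ⊆ (S : Set _) := by
    intro v hv
    simp only [Function.mem_support] at hv
    simp only [hS, Set.Finite.coe_toFinset, Set.mem_union, Set.mem_setOf_eq]
    right
    intro h1
    exact hv (by rw [vnorm_eq_one v h1, Real.log_one])
  have hsubb : (Function.support fun v : HeightOneSpectrum (𝓞 k) =>
      Real.log (vnorm v b)) ⊆ (S : Set _) := by
    intro v hv
    simp only [Function.mem_support] at hv
    simp only [hS, Set.Finite.coe_toFinset, Set.mem_union, Set.mem_setOf_eq]
    by_contra hcon
    push_neg at hcon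
    apply hv
    rw [hterm v, vnorm_eq_one v hcon.1, vnorm_eq_one v hcon.2,
      Real.log_one]
    ring
  have hsum : ∑ᶠ v : HeightOneSpectrum (𝓞 k), Real.log (vnorm v b) =
      (∑ᶠ v : HeightOneSpectrum (𝓞 k), Real.log (vnorm v ((algebraMap (𝓞 k) k) r))) -
        ∑ᶠ v : HeightOneSpectrum (𝓞 k), Real.log (vnorm v ((algebraMap (𝓞 k) k) s)) := by
    rw [finsum_eq_sum_of_support_subset _ hsubr, finsum_eq_sum_of_support_subset _ hsubs,
      finsum_eq_sum_of_support_subset _ hsubb, ← Finset.sum_sub_distrib]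
    exact Finset.sum_congr rfl fun v _ => hterm v
  rw [hsum, finsum_log_vnorm_int hr0, finsum_log_vnorm_int hs0,
    absNorm_span_cast_eq, absNorm_span_cast_eq]
  -- norms
  have hmul : (Algebra.norm ℚ) ((algebraMap (𝓞 k) k) r) =
      (Algebra.norm ℚ) b * (Algebra.norm ℚ) ((algebraMap (𝓞 k) k) s) := by
    rw [← map_mul]
    congr 1
    rw [← hrs, div_mul_cancel₀ _ hsk]
  rw [hmul]
  push_cast
  rw [abs_mul, Real.log_mul (abs_ne_zero.mpr (by exact_mod_cast norm_ne_zero hb))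
    (abs_ne_zero.mpr (by exact_mod_cast norm_ne_zero hsk))]
  ring

variable (k) in
lemma sum_log_infNorm {b : k} (hb : b ≠ 0) :
    ∑ w : InfinitePlace k, Real.log (infNorm k w b) =
      (Module.finrank ℚ k : ℝ)⁻¹ * Real.log |((Algebra.norm ℚ b : ℚ) : ℝ)| := by
  have h1 : ∀ w : InfinitePlace k, Real.log (infNorm k w b) =
      (Module.finrank ℚ k : ℝ)⁻¹ * ((w.mult : ℝ) * Real.log (w b)) := by
    intro w
    rw [infNorm, Real.log_rpow (InfinitePlace.pos_iff.mpr hb)]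
    ring
  simp_rw [h1, ← Finset.mul_sum]
  congr 1
  have h2 : ∀ w : InfinitePlace k, (w.mult : ℝ) * Real.log (w b) =
      Real.log ((w b) ^ w.mult) := by
    intro w
    rw [Real.log_pow]
  simp_rw [h2]
  rw [← Real.log_prod]
  · rw [NumberField.InfinitePlace.prod_eq_abs_norm b]
    norm_cast
  · intro w _
    exact pow_ne_zero _ (InfinitePlace.pos_iff.mpr hb).ne'

variable (k) in
lemma product_formula {b : k} (hb : b ≠ 0) :
    (∑ w : InfinitePlace k, Real.log (infNorm k w b)) +
      (∑ᶠ v : HeightOneSpectrum (𝓞 k), Real.log (finNorm k v b)) = 0 := by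
  classical
  have hfin : ∑ᶠ v : HeightOneSpectrum (𝓞 k), Real.log (finNorm k v b) =
      (Module.finrank ℚ k : ℝ)⁻¹ * ∑ᶠ v : HeightOneSpectrum (𝓞 k), Real.log (vnorm v b) := by
    set S : Finset (HeightOneSpectrum (𝓞 k)) := (finite_val_ne_one hb).toFinset with hS
    have hsub1 : (Function.support fun v : HeightOneSpectrum (𝓞 k) =>
        Real.log (finNorm k v b)) ⊆ (S : Set _) := by
      intro v hv
      simp only [hS, Set.Finite.coe_toFinset]
      exact support_log_finNorm_subset b hv
    have hsub2 : (Function.support fun v : HeightOneSpectrum (𝓞 k) =>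
        Real.log (vnorm v b)) ⊆ (S : Set _) := by
      intro v hv
      simp only [Function.mem_support] at hv
      simp only [hS, Set.Finite.coe_toFinset, Set.mem_setOf_eq]
      intro h1
      exact hv (by rw [vnorm_eq_one v h1, Real.log_one])
    rw [finsum_eq_sum_of_support_subset _ hsub1, finsum_eq_sum_of_support_subset _ hsub2,
      Finset.mul_sum]
    refine Finset.sum_congr rfl fun v _ => ?_
    rw [finNorm_def, Real.log_rpow (vnorm_pos v hb)]
  rw [hfin, finsum_log_vnorm hb, sum_log_infNorm k hb]
  ring

variable (k) in
lemma elemHeight_inv {b : k} (hb : b ≠ 0) : elemHeight k (b⁻¹) = elemHeight k b := by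
  classical
  have hbi : b⁻¹ ≠ 0 := inv_ne_zero hb
  have hinf : (∑ w : InfinitePlace k, logPlus (infNorm k w b)) -
      (∑ w : InfinitePlace k, logPlus (infNorm k w (b⁻¹))) =
        ∑ w : InfinitePlace k, Real.log (infNorm k w b) := by
    rw [← Finset.sum_sub_distrib]
    refine Finset.sum_congr rfl fun w _ => ?_
    rw [infNorm_inv k w b, logPlus_sub_logPlus_inv (infNorm_pos k w hb)]
  set S : Finset (HeightOneSpectrum (𝓞 k)) := (finite_val_ne_one hb).toFinset with hS
  have hsub1 : (Function.support fun v : HeightOneSpectrum (𝓞 k) =>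
      logPlus (finNorm k v b)) ⊆ (S : Set _) := by
    intro v hv
    simp only [hS, Set.Finite.coe_toFinset]
    exact support_logPlus_finNorm_subset b hv
  have hsub2 : (Function.support fun v : HeightOneSpectrum (𝓞 k) =>
      logPlus (finNorm k v (b⁻¹))) ⊆ (S : Set _) := by
    intro v hv
    have h := support_logPlus_finNorm_subset (b⁻¹) hv
    simp only [hS, Set.Finite.coe_toFinset, Set.mem_setOf_eq]
    intro h1
    exact h (by rw [map_inv₀, h1, inv_one])
  have hsub3 : (Function.support fun v : HeightOneSpectrum (𝓞 k) =>
      Real.log (finNorm k v b)) ⊆ (S : Set _) := by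
    intro v hv
    simp only [hS, Set.Finite.coe_toFinset]
    exact support_log_finNorm_subset b hv
  have hfin : (∑ᶠ v : HeightOneSpectrum (𝓞 k), logPlus (finNorm k v b)) -
      (∑ᶠ v : HeightOneSpectrum (𝓞 k), logPlus (finNorm k v (b⁻¹))) =
        ∑ᶠ v : HeightOneSpectrum (𝓞 k), Real.log (finNorm k v b) := by
    rw [finsum_eq_sum_of_support_subset _ hsub1, finsum_eq_sum_of_support_subset _ hsub2,
      finsum_eq_sum_of_support_subset _ hsub3, ← Finset.sum_sub_distrib]
    refine Finset.sum_congr rfl fun v _ => ?_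
    rw [finNorm_inv k v b, logPlus_sub_logPlus_inv (finNorm_pos k v hb)]
  have hprod := product_formula k hb
  unfold elemHeight
  linarith [hinf, hfin]

end Aux4
/-- If `(C, a) ∈ K_x` is a small map with `a(α) ≠ 0` for all but finitely many
`α ∈ C`, and `v` is any place of `k` (infinite or finite), then the function
`α ↦ 1/‖a(α)‖_v`, defined where `a(α) ≠ 0`, belongs to `C_x`:
`log⁺ (1/‖a(α)‖_v) = o(h(x(α)))` on the cofinite set `C \ {α : a(α) = 0}`. -/
theorem isSmallMap_inv_norm_ctrl {Λ : Type*} {M : ℕ} (x : Λ → (Fin (M + 1) → k))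
    (C : Set Λ) (a : Λ → k) (h : IsSmallMap k x C a)
    (ha : {α ∈ C | a α = 0}.Finite) :
    (∀ w : InfinitePlace k, ∀ ε > (0 : ℝ),
        ∃ Cε ⊆ C \ {α : Λ | a α = 0}, Cεᶜ.Finite ∧
          ∀ α ∈ Cε, logPlus ((infNorm k w (a α))⁻¹) ≤ ε * projHeight k (x α)) ∧
      (∀ v : HeightOneSpectrum (𝓞 k), ∀ ε > (0 : ℝ),
        ∃ Cε ⊆ C \ {α : Λ | a α = 0}, Cεᶜ.Finite ∧
          ∀ α ∈ Cε, logPlus ((finNorm k v (a α))⁻¹) ≤ ε * projHeight k (x α)) := by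
  obtain ⟨hC, hsmall⟩ := h
  have key : ∀ ε > (0 : ℝ), ∃ Cε ⊆ C \ {α : Λ | a α = 0}, Cεᶜ.Finite ∧
      ∀ α ∈ Cε, a α ≠ 0 ∧ elemHeight k (a α) ≤ ε * projHeight k (x α) := by
    intro ε hε
    obtain ⟨Cε, hsub, hfin, hbound⟩ := hsmall ε hε
    refine ⟨Cε \ {α : Λ | a α = 0}, ?_, ?_, ?_⟩
    · intro α hα
      exact ⟨hsub hα.1, hα.2⟩
    · refine (hfin.union ha).subset ?_
      intro α hα
      simp only [Set.mem_compl_iff, Set.mem_diff, Set.mem_setOf_eq, not_and, not_not] at hα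
      by_cases hc : α ∈ Cε
      · exact Or.inr ⟨hsub hc, hα hc⟩
      · exact Or.inl hc
    · intro α hα
      exact ⟨hα.2, hbound α hα.1⟩
  constructor
  · intro w ε hε
    obtain ⟨Cε, hsub, hfin, hbound⟩ := key ε hε
    refine ⟨Cε, hsub, hfin, fun α hα => ?_⟩
    obtain ⟨haz, hb⟩ := hbound α hα
    calc logPlus ((infNorm k w (a α))⁻¹)
        = logPlus (infNorm k w ((a α)⁻¹)) := by rw [infNorm_inv]
      _ ≤ elemHeight k ((a α)⁻¹) := logPlus_infNorm_le_elemHeight k w _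
      _ = elemHeight k (a α) := elemHeight_inv k haz
      _ ≤ ε * projHeight k (x α) := hb
  · intro v ε hε
    obtain ⟨Cε, hsub, hfin, hbound⟩ := key ε hε
    refine ⟨Cε, hsub, hfin, fun α hα => ?_⟩
    obtain ⟨haz, hb⟩ := hbound α hα
    calc logPlus ((finNorm k v (a α))⁻¹)
        = logPlus (finNorm k v ((a α)⁻¹)) := by rw [finNorm_inv]
      _ ≤ elemHeight k ((a α)⁻¹) := logPlus_finNorm_le_elemHeight k v (inv_ne_zero haz)
      _ = elemHeight k (a α) := elemHeight_inv k haz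
      _ ≤ ε * projHeight k (x α) := hb
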